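/- arXiv:1907.10525 — 7 statements merged into one kernel-verified Lean document; each statement's English description precedes it below -/
import Mathlib

section
/- Let (A, I) be a henselian pair. If M and N are finite projective A-modules such that M/IM and N/IN are isomorphic as A/I-modules, then M and N are isomorphic as A-modules. (This is the injectivity, on isomorphism classes, of the base-change map M ↦ M ⊗_A A/I from finite projective A-modules to finite projective A/I-modules.) -/
open TensorProduct

private lemma henselian_aux_surj_lift
    {A : Type*} [CommRing A] (I : Ideal A) (hjac : I ≤ Ideal.jacobson ⊥)
    (P : Type*) (Q : Type*) [AddCommGroup P] [Module A P] [AddCommGroup Q] [Module A Q]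
    [Module.Projective A P] [Module.Finite A Q]
    (ε : (P ⧸ (I • (⊤ : Submodule A P))) ≃ₗ[A] (Q ⧸ (I • (⊤ : Submodule A Q)))) :
    ∃ f : P →ₗ[A] Q, Function.Surjective f := by
  obtain ⟨f, hf⟩ := Module.projective_lifting_property
    (I • (⊤ : Submodule A Q)).mkQ (ε.toLinearMap ∘ₗ (I • (⊤ : Submodule A P)).mkQ)
    (Submodule.mkQ_surjective _)
  refine ⟨f, ?_⟩
  have hle : (⊤ : Submodule A Q) ≤ LinearMap.range f ⊔ I • (⊤ : Submodule A Q) := by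
    intro y _
    obtain ⟨x, hx⟩ := ε.surjective (Submodule.Quotient.mk y)
    obtain ⟨p, rfl⟩ := Submodule.mkQ_surjective _ x
    have h1 : Submodule.Quotient.mk (f p) = (Submodule.Quotient.mk y :
        Q ⧸ (I • (⊤ : Submodule A Q))) := by
      have := congrArg (fun g => g p) hf
      simpa using this.trans hx
    have hmem : y - f p ∈ I • (⊤ : Submodule A Q) := by
      have := (Submodule.Quotient.eq _).mp h1
      simpa using Submodule.neg_mem _ this
    have hy : y = f p + (y - f p) := by abel
    rw [hy]
    exact Submodule.add_mem _ (Submodule.mem_sup_left ⟨p, rfl⟩)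
      (Submodule.mem_sup_right hmem)
  have := Submodule.le_of_le_smul_of_le_jacobson_bot
    (Module.Finite.fg_top (R := A) (M := Q)) hjac (by simpa using hle)
  rw [← LinearMap.range_eq_top]
  exact top_le_iff.mp this

/-- **Henselian pairs: injectivity of base change on isomorphism classes of finite
projective modules.** Let `(A, I)` be a henselian pair. If `M` and `N` are finite projective
`A`-modules such that `M/IM ≅ N/IN` as `A/I`-modules, then `M ≅ N` as `A`-modules. -/
theorem henselian_finite_projective_baseChange_injective
    {A : Type*} [CommRing A] (I : Ideal A) [HenselianRing A I]
    (M N : Type*) [AddCommGroup M] [Module A M] [AddCommGroup N] [Module A N]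
    [Module.Finite A M] [Module.Projective A M]
    [Module.Finite A N] [Module.Projective A N]
    (e : ((A ⧸ I) ⊗[A] M) ≃ₗ[A ⧸ I] ((A ⧸ I) ⊗[A] N)) :
    Nonempty (M ≃ₗ[A] N) := by
  classical
  have hjac : I ≤ Ideal.jacobson ⊥ := HenselianRing.jac
  let qM : ((A ⧸ I) ⊗[A] M) ≃ₗ[A] M ⧸ (I • (⊤ : Submodule A M)) :=
    TensorProduct.quotTensorEquivQuotSMul M I
  let qN : ((A ⧸ I) ⊗[A] N) ≃ₗ[A] N ⧸ (I • (⊤ : Submodule A N)) :=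
    TensorProduct.quotTensorEquivQuotSMul N I
  let ebar : (M ⧸ (I • (⊤ : Submodule A M))) ≃ₗ[A] (N ⧸ (I • (⊤ : Submodule A N))) :=
    qM.symm.trans ((e.restrictScalars A).trans qN)
  obtain ⟨f, hfsurj⟩ := henselian_aux_surj_lift I hjac M N ebar
  obtain ⟨g, hgsurj⟩ := henselian_aux_surj_lift I hjac N M ebar.symm
  have hgf : Function.Surjective (g ∘ₗ f) := by
    exact (hgsurj.comp hfsurj : Function.Surjective (g ∘ f))
  have hinj : Function.Injective (g ∘ₗ f) :=
    OrzechProperty.injective_of_surjective_endomorphism (g ∘ₗ f) hgf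
  have hfinj : Function.Injective f := fun a b hab => hinj (by simp [LinearMap.comp_apply, hab])
  exact ⟨LinearEquiv.ofBijective f ⟨hfinj, hfsurj⟩⟩
end

section
/- Let S be a commutative ring and let M be a finitely presented S-module. Suppose that for every maximal ideal 𝔪 of S the canonical map 𝔪 ⊗_S M → M induced by scalar multiplication is injective (equivalently, Tor₁^S(M, S/𝔪) = 0 for every maximal ideal 𝔪; this holds in particular when the derived tensor product M ⊗^L_S k(x) is concentrated in degree 0 for every closed point x of Spec(S)). Then M is a finite projective S-module. -/
open TensorProduct

set_option maxHeartbeats 1000000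
set_option synthInstance.maxHeartbeats 400000

section Aux

variable {S : Type*} [CommRing S] (M : Type*) [AddCommGroup M] [Module S M]

/-- Auxiliary: the multiplication map `A ⊗[S] I → A` for `A = Localization.AtPrime I`. -/
noncomputable def auxMu (I : Ideal S) [I.IsPrime] :
    Localization.AtPrime I ⊗[S] I →ₗ[Localization.AtPrime I] Localization.AtPrime I :=
  (TensorProduct.AlgebraTensorModule.rid S (Localization.AtPrime I)
      (Localization.AtPrime I)).toLinearMap ∘ₗ
    TensorProduct.AlgebraTensorModule.map LinearMap.id I.subtype

lemma auxMu_tmul (I : Ideal S) [I.IsPrime] (a : Localization.AtPrime I) (x : I) :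
    auxMu I (a ⊗ₜ x) = (x : S) • a := rfl

lemma auxMu_injective (I : Ideal S) [I.IsPrime] : Function.Injective (auxMu (S := S) I) := by
  have hμcomm : ∀ z : Localization.AtPrime I ⊗[S] I,
      (TensorProduct.AlgebraTensorModule.rid S (Localization.AtPrime I) (Localization.AtPrime I))
        (LinearMap.lTensor (Localization.AtPrime I) I.subtype z) = auxMu I z := by
    intro z
    induction z using TensorProduct.induction_on with
    | zero => simp
    | tmul a x => simp [auxMu_tmul]
    | add x y hx hy => simp [map_add, hx, hy]
  have h1 : Function.Injective (LinearMap.lTensor (Localization.AtPrime I) I.subtype) :=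
    Module.Flat.lTensor_preserves_injective_linearMap _ Subtype.val_injective
  intro x y hxy
  exact h1 ((TensorProduct.AlgebraTensorModule.rid S (Localization.AtPrime I)
    (Localization.AtPrime I)).injective (by rw [hμcomm, hμcomm, hxy]))

lemma auxMu_range (I : Ideal S) [I.IsMaximal] :
    LinearMap.range (auxMu (S := S) I) = IsLocalRing.maximalIdeal (Localization.AtPrime I) := by
  rw [← Localization.AtPrime.map_eq_maximalIdeal]
  apply le_antisymm
  · rintro _ ⟨z, rfl⟩
    induction z using TensorProduct.induction_on with
    | zero => simp
    | tmul a x =>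
      rw [auxMu_tmul, Algebra.smul_def]
      exact Ideal.mul_mem_right _ _ (Ideal.mem_map_of_mem _ x.2)
    | add x y hx hy => rw [map_add]; exact add_mem hx hy
  · rw [Ideal.map_le_iff_le_comap]
    intro x hx
    exact ⟨(1 : Localization.AtPrime I) ⊗ₜ ⟨x, hx⟩,
      by rw [auxMu_tmul, Algebra.smul_def, mul_one]⟩

/-- Auxiliary: if `I ⊗[S] M → M` is injective, so is
`𝔪 ⊗ LocalizedModule I.primeCompl M → Localization.AtPrime I ⊗ LocalizedModule I.primeCompl M`. -/
lemma aux_rTensor_injective (I : Ideal S) [hI : I.IsMaximal]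
    (hφ : Function.Injective (TensorProduct.lift ((LinearMap.lsmul S M).comp I.subtype))) :
    Function.Injective ((IsLocalRing.maximalIdeal (Localization.AtPrime I)).subtype.rTensor
      (LocalizedModule I.primeCompl M)) := by
  set A := Localization.AtPrime I
  let J : Ideal (Localization.AtPrime I) := IsLocalRing.maximalIdeal (Localization.AtPrime I)
  let Mₚ := LocalizedModule I.primeCompl M
  let φ : I ⊗[S] M →ₗ[S] M := TensorProduct.lift ((LinearMap.lsmul S M).comp I.subtype)
  -- the isomorphism `A ⊗ I ≃ J`
  let ν : (Localization.AtPrime I ⊗[S] I) ≃ₗ[Localization.AtPrime I] J :=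
    (LinearEquiv.ofInjective (auxMu I) (auxMu_injective I)).trans
      (LinearEquiv.ofEq _ _ (auxMu_range I))
  have hν_val : ∀ z, (ν z : Localization.AtPrime I) = auxMu I z := fun z => rfl
  -- the base change structure on `Mₚ`
  have bc : IsBaseChange (Localization.AtPrime I)
      (LocalizedModule.mkLinearMap I.primeCompl M) :=
    IsLocalizedModule.isBaseChange I.primeCompl (Localization.AtPrime I) _
  -- the chain of equivalences
  let e4 : (Localization.AtPrime I ⊗[S] (I ⊗[S] M)) ≃ₗ[S]
      ((Localization.AtPrime I ⊗[S] I) ⊗[S] M) :=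
    (TensorProduct.assoc S (Localization.AtPrime I) I M).symm
  let e3 : ((Localization.AtPrime I ⊗[S] I) ⊗[S] M) ≃ₗ[S] (J ⊗[S] M) :=
    TensorProduct.congr (ν.restrictScalars S) (LinearEquiv.refl S M)
  let e2 : (J ⊗[S] M) ≃ₗ[Localization.AtPrime I]
      (J ⊗[Localization.AtPrime I] (Localization.AtPrime I ⊗[S] M)) :=
    (TensorProduct.AlgebraTensorModule.cancelBaseChange S (Localization.AtPrime I)
      (Localization.AtPrime I) J M).symm
  let e1 : (J ⊗[Localization.AtPrime I] (Localization.AtPrime I ⊗[S] M))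
      ≃ₗ[Localization.AtPrime I] (J ⊗[Localization.AtPrime I] Mₚ) :=
    TensorProduct.congr (LinearEquiv.refl (Localization.AtPrime I) J) bc.equiv
  let E : (Localization.AtPrime I ⊗[S] (I ⊗[S] M)) ≃ (J ⊗[Localization.AtPrime I] Mₚ) :=
    e4.toEquiv.trans ((e3.toEquiv.trans e2.toEquiv).trans e1.toEquiv)
  -- the multiplication map `J ⊗[A] Mₚ → Mₚ`
  let ψ : J ⊗[Localization.AtPrime I] Mₚ →ₗ[Localization.AtPrime I] Mₚ :=
    TensorProduct.lift ((LinearMap.lsmul (Localization.AtPrime I) Mₚ).comp J.subtype)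
  have hψ_tmul : ∀ (j : J) (m : Mₚ), ψ (j ⊗ₜ m) = (j : Localization.AtPrime I) • m :=
    fun j m => rfl
  have hE : ∀ z, E z = e1 (e2 (e3 (e4 z))) := fun _ => rfl
  have key' : ∀ z : Localization.AtPrime I ⊗[S] (I ⊗[S] M),
      ψ (e1 (e2 (e3 (e4 z)))) = bc.equiv (LinearMap.lTensor (Localization.AtPrime I) φ z) := by
    intro z
    induction z using TensorProduct.induction_on with
    | zero => simp only [map_zero]
    | tmul a w =>
      induction w using TensorProduct.induction_on with
      | zero => simp only [TensorProduct.tmul_zero, map_zero]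
      | tmul x m =>
        rw [show e4 (a ⊗ₜ (x ⊗ₜ m)) = (a ⊗ₜ x) ⊗ₜ m from
          TensorProduct.assoc_symm_tmul a x m]
        rw [show e3 ((a ⊗ₜ x) ⊗ₜ m) = (ν (a ⊗ₜ x)) ⊗ₜ m from rfl]
        rw [show e2 ((ν (a ⊗ₜ x)) ⊗ₜ m) = (ν (a ⊗ₜ x)) ⊗ₜ ((1 : Localization.AtPrime I) ⊗ₜ m)
          from rfl]
        rw [show e1 ((ν (a ⊗ₜ x)) ⊗ₜ ((1 : Localization.AtPrime I) ⊗ₜ m)) =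
          (ν (a ⊗ₜ x)) ⊗ₜ bc.equiv ((1 : Localization.AtPrime I) ⊗ₜ m) from rfl]
        rw [hψ_tmul, hν_val, auxMu_tmul]
        rw [LinearMap.lTensor_tmul]
        rw [show φ (x ⊗ₜ m) = (x : S) • m from rfl]
        rw [bc.equiv_tmul, bc.equiv_tmul, one_smul]
        rw [map_smul]
        rw [Algebra.smul_def, mul_smul, algebraMap_smul]
        rw [smul_comm]
      | add w1 w2 hw1 hw2 =>
        rw [TensorProduct.tmul_add]
        simp only [map_add, hw1, hw2]
    | add z1 z2 hz1 hz2 =>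
      simp only [map_add, hz1, hz2]
  have key : ∀ z : Localization.AtPrime I ⊗[S] (I ⊗[S] M),
      ψ (E z) = bc.equiv (LinearMap.lTensor (Localization.AtPrime I) φ z) := by
    intro z; rw [hE]; exact key' z
  have hψinj : Function.Injective ψ := by
    have hlT : Function.Injective (LinearMap.lTensor (Localization.AtPrime I) φ) :=
      Module.Flat.lTensor_preserves_injective_linearMap φ hφ
    intro x y hxy
    obtain ⟨z, rfl⟩ := E.surjective x
    obtain ⟨w, rfl⟩ := E.surjective y
    rw [key, key] at hxy
    exact congrArg E (hlT (bc.equiv.injective hxy))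
  have hcomm : ∀ z : J ⊗[Localization.AtPrime I] Mₚ,
      (TensorProduct.lid (Localization.AtPrime I) Mₚ) (J.subtype.rTensor Mₚ z) = ψ z := by
    intro z
    induction z using TensorProduct.induction_on with
    | zero => simp
    | tmul j m => simp [hψ_tmul]
    | add x y hx hy => simp [map_add, hx, hy]
  intro x y hxy
  apply hψinj
  rw [← hcomm, ← hcomm, hxy]

end Aux

/-- Let `S` be a commutative ring and `M` a finitely presented `S`-module. If for every
maximal ideal `𝔪` of `S` the canonical map `𝔪 ⊗[S] M → M` induced by scalar
multiplication is injective, then `M` is a finite projective `S`-module. -/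
theorem finite_projective_of_finitePresentation_of_maximal_smul_injective
    {S : Type*} [CommRing S] (M : Type*) [AddCommGroup M] [Module S M]
    [Module.FinitePresentation S M]
    (h : ∀ (𝔪 : Ideal S), 𝔪.IsMaximal →
      Function.Injective (TensorProduct.lift ((LinearMap.lsmul S M).comp 𝔪.subtype))) :
    Module.Finite S M ∧ Module.Projective S M := by
  refine ⟨inferInstance, ?_⟩
  apply Module.projective_of_localization_maximal
  intro I hI
  have hfree : Module.Free (Localization.AtPrime I) (LocalizedModule I.primeCompl M) :=
    Module.free_of_maximalIdeal_rTensor_injective (aux_rTensor_injective M I (h I hI))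
  infer_instance
end

section
/- Let R be a commutative ring and M a projective R-module. Let Δ : Λ_R(M) → Λ_R(M × M) be the R-algebra homomorphism between exterior algebras induced, by functoriality of the exterior algebra, by the diagonal map M → M × M, m ↦ (m, m), and let inl, inr : Λ_R(M) → Λ_R(M × M) be the R-algebra homomorphisms induced by the two inclusions m ↦ (m, 0) and m ↦ (0, m). Then an element x ∈ Λ_R(M) satisfies Δ(x) = inl(x) + inr(x) if and only if x lies in the image of the canonical map ι : M → Λ_R(M), i.e. in Λ¹(M). (Under the canonical identification Λ(M ⊕ M) ≅ Λ(M) ⊗_R Λ(M), this says that the set of primitive elements {x ∈ Λ(M) | μ*(x) = 1 ⊗ x + x ⊗ 1}, for the comultiplication μ* coming from the diagonal of M, is exactly Λ¹(M).) -/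
open ExteriorAlgebra

noncomputable section PrimAux

variable {R M N : Type*} [CommRing R] [AddCommGroup M] [Module R M]
  [AddCommGroup N] [Module R N]

local notation d "⌟" x => CliffordAlgebra.contractLeft (Q := 0) d x

/-- Anticommutation in the exterior algebra. -/
private lemma prim_ι_anticomm (a b : M) : ι R a * ι R b = -(ι R b * ι R a) := by
  have h := ι_sq_zero (R := R) (a + b)
  rw [map_add, add_mul, mul_add, mul_add, ι_sq_zero, ι_sq_zero, zero_add, add_zero] at h
  exact eq_neg_of_add_eq_zero_left h

/-- Naturality of contraction with respect to functorial maps of exterior algebras. -/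
private lemma prim_contract_map (f : M →ₗ[R] N) (d : Module.Dual R N)
    (x : ExteriorAlgebra R M) :
    (d ⌟ (map f x)) = map f ((d ∘ₗ f) ⌟ x) := by
  induction x using CliffordAlgebra.left_induction with
  | algebraMap r =>
      rw [AlgHom.commutes, CliffordAlgebra.contractLeft_algebraMap,
        CliffordAlgebra.contractLeft_algebraMap, map_zero]
  | add x y hx hy => rw [map_add, map_add, map_add, hx, hy, map_add]
  | ι_mul x m hx =>
      rw [map_mul, map_apply_ι, CliffordAlgebra.contractLeft_ι_mul,
        CliffordAlgebra.contractLeft_ι_mul, map_sub, map_smul, map_mul, map_apply_ι, hx]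
      rfl

private lemma prim_contract_zero (x : ExteriorAlgebra R M) :
    ((0 : Module.Dual R M) ⌟ x) = 0 := by
  rw [map_zero]; rfl

/-- `map 0` lands in the scalars. -/
private lemma prim_map_zero (x : ExteriorAlgebra R M) :
    ∃ r : R, map (0 : M →ₗ[R] M) x = algebraMap R _ r := by
  induction x using CliffordAlgebra.induction with
  | algebraMap r => exact ⟨r, AlgHom.commutes _ r⟩
  | ι m => exact ⟨0, by rw [map_apply_ι, LinearMap.zero_apply, map_zero, map_zero]⟩
  | mul x y hx hy =>
      obtain ⟨r, hr⟩ := hx; obtain ⟨t, ht⟩ := hy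
      exact ⟨r * t, by rw [map_mul, hr, ht, map_mul]⟩
  | add x y hx hy =>
      obtain ⟨r, hr⟩ := hx; obtain ⟨t, ht⟩ := hy
      exact ⟨r + t, by rw [map_add, hr, ht, map_add]⟩

/-! ### Coordinate truncations of `α →₀ R` -/

variable {α : Type*} [DecidableEq α]

/-- Truncation to a finite set of coordinates. -/
private def prim_pr (S : Finset α) : (α →₀ R) →ₗ[R] (α →₀ R) :=
  ∑ i ∈ S, Finsupp.lsingle i ∘ₗ Finsupp.lapply i

private lemma prim_pr_single (S : Finset α) (j : α) (r : R) :
    prim_pr S (Finsupp.single j r) = if j ∈ S then Finsupp.single j r else 0 := by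
  rw [prim_pr, LinearMap.sum_apply]
  have h1 : ∀ i ∈ S, ((Finsupp.lsingle i ∘ₗ Finsupp.lapply i : (α →₀ R) →ₗ[R] _)
        (Finsupp.single j r)) = if j = i then Finsupp.single j r else 0 := by
    intro i _
    simp only [LinearMap.comp_apply, Finsupp.lapply_apply, Finsupp.lsingle_apply,
      Finsupp.single_apply]
    split
    · subst ‹j = i›; rfl
    · simp
  rw [Finset.sum_congr rfl h1, Finset.sum_ite_eq S j _]

private lemma prim_pr_comp (S T : Finset α) (h : S ⊆ T) :
    prim_pr (R := R) T ∘ₗ prim_pr S = prim_pr S := by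
  refine Finsupp.lhom_ext fun j r => ?_
  simp only [LinearMap.comp_apply, prim_pr_single]
  split
  · rw [prim_pr_single, if_pos (h ‹j ∈ S›)]
  · rw [map_zero]

private lemma prim_pr_comp' (S T : Finset α) (h : S ⊆ T) :
    prim_pr (R := R) S ∘ₗ prim_pr T = prim_pr S := by
  refine Finsupp.lhom_ext fun j r => ?_
  simp only [LinearMap.comp_apply, prim_pr_single]
  by_cases hjS : j ∈ S
  · rw [if_pos (h hjS), prim_pr_single, if_pos hjS]
  · rw [if_neg hjS]
    split
    · rw [prim_pr_single, if_neg hjS]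
    · rw [map_zero]

private lemma prim_lapply_pr (S : Finset α) (i : α) (h : i ∈ S) :
    (Finsupp.lapply i : (α →₀ R) →ₗ[R] R) ∘ₗ prim_pr S = Finsupp.lapply i := by
  refine Finsupp.lhom_ext fun j r => ?_
  simp only [LinearMap.comp_apply, prim_pr_single]
  split
  · rfl
  · rw [map_zero, Finsupp.lapply_apply, Finsupp.single_apply,
      if_neg (fun hji : j = i => ‹j ∉ S› (hji ▸ h))]

private lemma prim_lapply_pr_zero (S : Finset α) (i : α) (h : i ∉ S) :
    (Finsupp.lapply i : (α →₀ R) →ₗ[R] R) ∘ₗ prim_pr S = 0 := by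
  refine Finsupp.lhom_ext fun j r => ?_
  simp only [LinearMap.comp_apply, prim_pr_single, LinearMap.zero_apply]
  split
  · rw [Finsupp.lapply_apply, Finsupp.single_apply,
      if_neg (fun hji : j = i => h (hji ▸ ‹j ∈ S›))]
  · rw [map_zero]

private lemma prim_pr_insert (S : Finset α) (i : α) (h : i ∉ S) :
    prim_pr (R := R) (insert i S) =
      Finsupp.lsingle i ∘ₗ Finsupp.lapply i + prim_pr S := by
  rw [prim_pr, Finset.sum_insert h]; rfl

private lemma prim_pr_apply (S : Finset α) (m : α →₀ R) (a : α) :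
    prim_pr S m a = if a ∈ S then m a else 0 := by
  rw [prim_pr, LinearMap.sum_apply, Finsupp.finset_sum_apply]
  have h1 : ∀ i ∈ S, ((Finsupp.lsingle i ∘ₗ Finsupp.lapply i : (α →₀ R) →ₗ[R] _) m) a
      = if i = a then m a else 0 := by
    intro i _
    simp only [LinearMap.comp_apply, Finsupp.lapply_apply, Finsupp.lsingle_apply,
      Finsupp.single_apply]
    split
    · subst ‹i = a›; rfl
    · rfl
  rw [Finset.sum_congr rfl h1, Finset.sum_ite_eq' S a _]

private lemma prim_pr_support (m : α →₀ R) : prim_pr m.support m = m := by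
  ext a
  rw [prim_pr_apply]
  split
  · rfl
  · exact (Finsupp.notMem_support_iff.mp ‹_›).symm


private lemma prim_map_map' {N' : Type*} [AddCommGroup N'] [Module R N']
    (f : M →ₗ[R] N) (g : N →ₗ[R] N') (x : ExteriorAlgebra R M) :
    map g (map f x) = map (g ∘ₗ f) x := by
  rw [← ExteriorAlgebra.map_comp_map]; rfl

section Generic

variable (pr : Finset α → ((α →₀ R) →ₗ[R] (α →₀ R)))
  (hprcomp : ∀ S T : Finset α, S ⊆ T → pr T ∘ₗ pr S = pr S)
  (hprcomp' : ∀ S T : Finset α, S ⊆ T → pr S ∘ₗ pr T = pr S)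
  (hlap : ∀ (S : Finset α) (i : α), i ∈ S →
    (Finsupp.lapply i : (α →₀ R) →ₗ[R] R) ∘ₗ pr S = Finsupp.lapply i)
  (hins : ∀ (S : Finset α) (i : α), i ∉ S →
    pr (insert i S) = Finsupp.lsingle i ∘ₗ Finsupp.lapply i + pr S)
  (hpr0 : pr ∅ = 0)
  (hsupp : ∀ m : α →₀ R, pr m.support m = m)

include hprcomp' hlap hins in
private lemma gen_key (i : α) (S : Finset α) (h : i ∉ S)
    (x : ExteriorAlgebra R (α →₀ R)) :
    map (pr S) (map (pr (insert i S)) x)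
      = map (pr (insert i S)) x
        - ι R (Finsupp.single i 1) *
          ((Finsupp.lapply i : (α →₀ R) →ₗ[R] R) ⌟ map (pr (insert i S)) x) := by
  induction x using CliffordAlgebra.left_induction with
  | algebraMap r =>
      rw [AlgHom.commutes, AlgHom.commutes, CliffordAlgebra.contractLeft_algebraMap,
        mul_zero, sub_zero]
  | add x y hx hy =>
      rw [map_add, map_add, map_add, hx, hy, mul_add]
      abel
  | ι_mul w v hw =>
      have hc1 : pr S (pr (insert i S) v) = pr S v := by
        have := LinearMap.congr_fun (hprcomp' S (insert i S)
          (Finset.subset_insert i S)) v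
        rwa [LinearMap.comp_apply] at this
      have hc2 : (Finsupp.lapply i : (α →₀ R) →ₗ[R] R) (pr (insert i S) v) = v i := by
        have := LinearMap.congr_fun (hlap (insert i S) i
          (Finset.mem_insert_self i S)) v
        rwa [LinearMap.comp_apply] at this
      rw [map_mul, map_apply_ι, map_mul, map_apply_ι, hc1, hw,
        CliffordAlgebra.contractLeft_ι_mul, hc2]
      have hsplit : ι R (pr (insert i S) v)
          = ι R (pr S v) + (v i) • ι R (Finsupp.single i 1) := by
        have := LinearMap.congr_fun (hins S i h) v
        rw [LinearMap.add_apply, LinearMap.comp_apply, Finsupp.lapply_apply,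
          Finsupp.lsingle_apply] at this
        rw [this, map_add, show (Finsupp.single i (v i)) = (v i) • Finsupp.single i 1 by
          rw [Finsupp.smul_single', mul_one], map_smul, add_comm]
      rw [hsplit]
      have hee : ∀ z : ExteriorAlgebra R (α →₀ R),
          ι R (Finsupp.single i 1 : α →₀ R) * (ι R (Finsupp.single i 1 : α →₀ R) * z)
            = 0 := by
        intro z; rw [← mul_assoc, ι_sq_zero, zero_mul]
      have hue : ∀ z : ExteriorAlgebra R (α →₀ R),
          ι R (pr S v) * (ι R (Finsupp.single i 1 : α →₀ R) * z)
            = -(ι R (Finsupp.single i 1 : α →₀ R) * (ι R (pr S v) * z)) := by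
        intro z; rw [← mul_assoc, prim_ι_anticomm, neg_mul, mul_assoc]
      simp only [mul_sub, sub_mul, add_mul, mul_add, smul_mul_assoc, mul_smul_comm,
        hee, hue, smul_zero, mul_zero, neg_neg]
      abel

include hprcomp in
private lemma gen_mono {S T : Finset α} (hST : S ⊆ T) {x : ExteriorAlgebra R (α →₀ R)}
    (hx : map (pr S) x = x) : map (pr T) x = x := by
  conv_lhs => rw [← hx]
  rw [prim_map_map', hprcomp S T hST, hx]

include hprcomp hsupp in
private lemma gen_exists (x : ExteriorAlgebra R (α →₀ R)) :
    ∃ S : Finset α, map (pr S) x = x := by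
  induction x using ExteriorAlgebra.induction with
  | algebraMap r => exact ⟨∅, AlgHom.commutes _ r⟩
  | ι m => exact ⟨m.support, by rw [map_apply_ι, hsupp]⟩
  | mul x y hx hy =>
      obtain ⟨S, hS⟩ := hx; obtain ⟨T, hT⟩ := hy
      exact ⟨S ∪ T, by rw [map_mul, gen_mono pr hprcomp Finset.subset_union_left hS,
        gen_mono pr hprcomp Finset.subset_union_right hT]⟩
  | add x y hx hy =>
      obtain ⟨S, hS⟩ := hx; obtain ⟨T, hT⟩ := hy
      exact ⟨S ∪ T, by rw [map_add, gen_mono pr hprcomp Finset.subset_union_left hS,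
        gen_mono pr hprcomp Finset.subset_union_right hT]⟩

include hprcomp' hlap hins hpr0 in
private lemma gen_scalar (S : Finset α) :
    ∀ y : ExteriorAlgebra R (α →₀ R), map (pr S) y = y →
      (∀ φ : Module.Dual R (α →₀ R), (φ ⌟ y) = 0) →
      ∃ r : R, y = algebraMap R _ r := by
  induction S using Finset.induction_on with
  | empty =>
      intro y hy _
      obtain ⟨r, hr⟩ := prim_map_zero y
      exact ⟨r, by rw [← hy, hpr0, hr]⟩
  | @insert i S hi ih =>
      intro y hy hφ
      have hkey := gen_key pr hprcomp' hlap hins i S hi y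
      rw [hy, hφ (Finsupp.lapply i), mul_zero, sub_zero] at hkey
      exact ih y hkey hφ

include hprcomp hprcomp' hlap hins hpr0 in
private lemma gen_deg (S : Finset α) :
    ∀ y : ExteriorAlgebra R (α →₀ R), map (pr S) y = y →
      (∀ φ ψ : Module.Dual R (α →₀ R), (φ ⌟ (ψ ⌟ y)) = 0) →
      ∃ (m : α →₀ R) (r : R), y = ι R m + algebraMap R _ r := by
  induction S using Finset.induction_on with
  | empty =>
      intro y hy _
      obtain ⟨r, hr⟩ := prim_map_zero y
      exact ⟨0, r, by rw [map_zero, zero_add, ← hy, hpr0, hr]⟩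
  | @insert i S hi ih =>
      intro y hy hφ
      have hbfix : map (pr (insert i S))
          ((Finsupp.lapply i : (α →₀ R) →ₗ[R] R) ⌟ y)
            = ((Finsupp.lapply i : (α →₀ R) →ₗ[R] R) ⌟ y) := by
        conv_rhs => rw [← hy]
        rw [prim_contract_map, hlap (insert i S) i (Finset.mem_insert_self i S)]
      obtain ⟨rb, hrb⟩ := gen_scalar pr hprcomp' hlap hins hpr0 (insert i S) _ hbfix
        (fun φ => hφ φ (Finsupp.lapply i))
      have hkey := gen_key pr hprcomp' hlap hins i S hi y
      rw [hy, hrb] at hkey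
      have hzfix : map (pr S) (map (pr S) y) = map (pr S) y := by
        rw [prim_map_map', hprcomp S S (Finset.Subset.refl S)]
      have hzc : ∀ φ ψ : Module.Dual R (α →₀ R),
          (φ ⌟ (ψ ⌟ map (pr S) y)) = 0 := by
        intro φ ψ
        have e1 := prim_contract_map (pr S) ψ y
        rw [e1]
        have e2 := prim_contract_map (pr S) φ ((ψ ∘ₗ pr S) ⌟ y)
        rw [e2, hφ _ _, map_zero]
      obtain ⟨m, r, hmr⟩ := ih (map (pr S) y) hzfix hzc
      refine ⟨m + rb • Finsupp.single i 1, r, ?_⟩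
      have hy2 : y = map (pr S) y
          + ι R (Finsupp.single i 1 : α →₀ R) * algebraMap R _ rb := by
        rw [hkey, sub_add_cancel]
      rw [hy2, hmr, map_add, map_smul,
        show (ι R (Finsupp.single i 1 : α →₀ R) * algebraMap R _ rb)
          = rb • ι R (Finsupp.single i 1 : α →₀ R) from by
            rw [← Algebra.commutes, ← Algebra.smul_def]]
      abel

end Generic

private lemma prim_free (y : ExteriorAlgebra R (α →₀ R))
    (h0 : map (0 : (α →₀ R) →ₗ[R] (α →₀ R)) y = 0)
    (h2 : ∀ φ ψ : Module.Dual R (α →₀ R), (φ ⌟ (ψ ⌟ y)) = 0) :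
    ∃ m, y = ι R m := by
  have hpr0 : prim_pr (R := R) (α := α) ∅ = 0 := by rw [prim_pr, Finset.sum_empty]
  obtain ⟨S, hS⟩ := gen_exists prim_pr prim_pr_comp prim_pr_support y
  obtain ⟨m, r, rfl⟩ := gen_deg prim_pr prim_pr_comp prim_pr_comp' prim_lapply_pr
    prim_pr_insert hpr0 S y hS h2
  rw [map_add, map_apply_ι, LinearMap.zero_apply, map_zero, zero_add,
    AlgHom.commutes] at h0
  rw [(ExteriorAlgebra.algebraMap_eq_zero_iff (M := α →₀ R) r).mp h0, map_zero, add_zero]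
  exact ⟨m, rfl⟩

private lemma prim_conditions (x : ExteriorAlgebra R M)
    (h : map ((LinearMap.id : M →ₗ[R] M).prod LinearMap.id) x =
        map (LinearMap.inl R M M) x + map (LinearMap.inr R M M) x) :
    map (0 : M →ₗ[R] M) x = 0 ∧
      ∀ φ ψ : Module.Dual R M, (φ ⌟ (ψ ⌟ x)) = 0 := by
  set Δ := (LinearMap.id : M →ₗ[R] M).prod LinearMap.id with hΔ
  have c0 : LinearMap.fst R M M ∘ₗ Δ = LinearMap.id := by ext m; rfl
  have c0l : LinearMap.fst R M M ∘ₗ LinearMap.inl R M M = LinearMap.id := by ext m; rfl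
  have c0r : LinearMap.fst R M M ∘ₗ LinearMap.inr R M M = 0 := by ext m; rfl
  have hinj : Function.Injective (map (R := R) Δ) := by
    intro a b hab
    have := congrArg (map (LinearMap.fst R M M)) hab
    rwa [prim_map_map', prim_map_map', c0, map_id, AlgHom.id_apply] at this
  constructor
  · have ha := congrArg (map (LinearMap.fst R M M)) h
    rw [map_add, prim_map_map', prim_map_map', prim_map_map', c0, c0l, c0r, map_id,
      AlgHom.id_apply] at ha
    exact (left_eq_add.mp ha)
  · intro φ ψ
    have c1 : (ψ ∘ₗ LinearMap.snd R M M) ∘ₗ Δ = ψ := by ext m; rfl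
    have c2 : (ψ ∘ₗ LinearMap.snd R M M) ∘ₗ LinearMap.inl R M M = 0 := by ext m; simp
    have c3 : (ψ ∘ₗ LinearMap.snd R M M) ∘ₗ LinearMap.inr R M M = ψ := by ext m; rfl
    have c4 : (φ ∘ₗ LinearMap.fst R M M) ∘ₗ Δ = φ := by ext m; rfl
    have c5 : (φ ∘ₗ LinearMap.fst R M M) ∘ₗ LinearMap.inr R M M = 0 := by ext m; simp
    have h1 := congrArg (fun t => ((ψ ∘ₗ LinearMap.snd R M M) ⌟ t)) h
    simp only [map_add] at h1
    rw [prim_contract_map, prim_contract_map, prim_contract_map, c1, c2, c3,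
      prim_contract_zero, map_zero, zero_add] at h1
    have h2 := congrArg (fun t => ((φ ∘ₗ LinearMap.fst R M M) ⌟ t)) h1
    rw [prim_contract_map, prim_contract_map, c4, c5, prim_contract_zero, map_zero] at h2
    exact hinj (h2.trans (map_zero (map (R := R) Δ)).symm)

end PrimAux

/-- **Primitive elements in exterior algebras.** Let `R` be a commutative ring and `M` a
projective `R`-module. Let `Δ : Λ(M) → Λ(M × M)` be the algebra map induced by the
diagonal `m ↦ (m, m)`, and `inl, inr : Λ(M) → Λ(M × M)` the algebra maps induced by the
two inclusions `m ↦ (m, 0)` and `m ↦ (0, m)`. Then `Δ(x) = inl(x) + inr(x)` if and only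
if `x` lies in the image `Λ¹(M)` of the canonical map `ι : M → Λ(M)`. -/
theorem exteriorAlgebra_primitive_iff_mem_range_ι
    {R M : Type*} [CommRing R] [AddCommGroup M] [Module R M] [Module.Projective R M]
    (x : ExteriorAlgebra R M) :
    ExteriorAlgebra.map ((LinearMap.id : M →ₗ[R] M).prod LinearMap.id) x =
        ExteriorAlgebra.map (LinearMap.inl R M M) x +
          ExteriorAlgebra.map (LinearMap.inr R M M) x ↔
      x ∈ LinearMap.range (ExteriorAlgebra.ι R (M := M)) := by
  classical
  constructor
  · intro h
    obtain ⟨ha, hb⟩ := prim_conditions x h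
    obtain ⟨s, hs⟩ := Module.projective_def'.mp ‹Module.Projective R M›
    have h0' : map (0 : (M →₀ R) →ₗ[R] (M →₀ R)) (map s x) = 0 := by
      rw [prim_map_map', show (0 : (M →₀ R) →ₗ[R] (M →₀ R)) ∘ₗ s
          = s ∘ₗ (0 : M →ₗ[R] M) from by rw [LinearMap.zero_comp, LinearMap.comp_zero],
        ← prim_map_map', ha, map_zero]
    have h2' : ∀ Φ Ψ : Module.Dual R (M →₀ R),
        CliffordAlgebra.contractLeft (Q := 0) Φ
          (CliffordAlgebra.contractLeft (Q := 0) Ψ (map s x)) = 0 := by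
      intro Φ Ψ
      have e1 := prim_contract_map s Ψ x
      rw [e1]
      have e2 := prim_contract_map s Φ (CliffordAlgebra.contractLeft (Q := 0) (Ψ ∘ₗ s) x)
      rw [e2, hb _ _, map_zero]
    obtain ⟨m, hm⟩ := prim_free (map s x) h0' h2'
    refine ⟨Finsupp.linearCombination R (id : M → M) m, ?_⟩
    have hx : map (Finsupp.linearCombination R (id : M → M)) (map s x) = x := by
      rw [prim_map_map', hs, map_id, AlgHom.id_apply]
    rw [← hx, hm, map_apply_ι]
  · rintro ⟨m, rfl⟩
    rw [map_apply_ι, map_apply_ι, map_apply_ι, ← map_add]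
    congr 1
    ext <;> simp
end

section
/- Let A be a commutative ring, I₀ ⊆ A an ideal, φ : A → A a ring endomorphism, and J ⊆ A an ideal on which φ is pointwise topologically nilpotent for the I₀-adic topology. Let M be an A-module which is I₀-adically separated (for example, a finite projective module over an I₀-adically separated ring), and let φ_M : M → M be a φ-semilinear endomorphism. If m ∈ J·M satisfies φ_M(m) = m, then m = 0. Consequently, the φ_M-fixed points of M inject into M/J·M. -/
/-- Let `A` be a commutative ring, `I₀ ⊆ A` an ideal, `φ : A → A` a ring endomorphism and
`J ⊆ A` an ideal on which `φ` is pointwise topologically nilpotent for the `I₀`-adic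
topology. Let `M` be an `I₀`-adically separated `A`-module and `φM : M → M` a
`φ`-semilinear endomorphism. If `m ∈ J • M` satisfies `φM m = m`, then `m = 0`. -/
theorem semilinear_fixed_point_in_smul_eq_zero
    {A M : Type*} [CommRing A] [AddCommGroup M] [Module A M]
    (I₀ J : Ideal A) (φ : A →+* A)
    (hnil : ∀ a ∈ J, ∀ n : ℕ, ∃ N : ℕ, ∀ k ≥ N, (⇑φ)^[k] a ∈ I₀ ^ n)
    [IsHausdorff I₀ M]
    (φM : M →ₛₗ[φ] M) (m : M)
    (hm : m ∈ (J • ⊤ : Submodule A M)) (hfix : φM m = m) :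
    m = 0 := by
  have iter : ∀ (k : ℕ) (a : A) (x : M),
      (⇑φM)^[k] (a • x) = (⇑φ)^[k] a • (⇑φM)^[k] x := by
    intro k
    induction k with
    | zero => intro a x; simp
    | succ k ih =>
      intro a x
      simp only [Function.iterate_succ', Function.comp_apply, ih, map_smulₛₗ]
  have iterAdd : ∀ (k : ℕ) (x y : M),
      (⇑φM)^[k] (x + y) = (⇑φM)^[k] x + (⇑φM)^[k] y := by
    intro k
    induction k with
    | zero => intro x y; simp
    | succ k ih =>
      intro x y
      simp only [Function.iterate_succ', Function.comp_apply, ih, map_add]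
  have key : ∀ n : ℕ, ∃ N : ℕ, ∀ k ≥ N, (⇑φM)^[k] m ∈ (I₀ ^ n • ⊤ : Submodule A M) := by
    intro n
    refine Submodule.smul_induction_on hm ?_ ?_
    · intro a ha x _
      obtain ⟨N, hN⟩ := hnil a ha n
      exact ⟨N, fun k hk => by
        rw [iter]
        exact Submodule.smul_mem_smul (hN k hk) trivial⟩
    · rintro x y ⟨N₁, h₁⟩ ⟨N₂, h₂⟩
      refine ⟨max N₁ N₂, fun k hk => ?_⟩
      rw [iterAdd]
      exact Submodule.add_mem _ (h₁ k (le_trans (le_max_left _ _) hk))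
        (h₂ k (le_trans (le_max_right _ _) hk))
  have fixiter : ∀ k : ℕ, (⇑φM)^[k] m = m := fun k => Function.iterate_fixed hfix k
  have hall : ∀ n : ℕ, m ∈ (I₀ ^ n • ⊤ : Submodule A M) := by
    intro n
    obtain ⟨N, hN⟩ := key n
    simpa [fixiter] using hN N le_rfl
  exact IsHausdorff.haus ‹IsHausdorff I₀ M› m fun n => SModEq.zero.mpr (hall n)
end

section
/- Let A be a commutative ring, I₀ ⊆ A an ideal, φ : A → A a ring endomorphism with φ(I₀) ⊆ I₀, and J ⊆ A an ideal with φ(J) ⊆ J on which φ is pointwise topologically nilpotent for the I₀-adic topology. Let M be an A-module which is I₀-adically complete and separated (for example, a finite projective module over an I₀-adically complete ring), let φ_M : M → M be a φ-semilinear endomorphism, and assume that the submodule J·M is closed in the I₀-adic topology of M, i.e. ⋂ₙ (J·M + I₀ⁿ·M) = J·M. Then for every m ∈ M with φ_M(m) − m ∈ J·M there exists a unique m' ∈ M such that φ_M(m') = m' and m' − m ∈ J·M. Equivalently, reduction modulo J·M induces a bijection from the φ_M-fixed points of M onto the fixed points of the induced semilinear endomorphism of M/J·M. -/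
/-- Let `A` be a commutative ring, `I₀ ⊆ A` an ideal, `φ : A → A` a ring endomorphism
with `φ(I₀) ⊆ I₀`, and `J ⊆ A` an ideal with `φ(J) ⊆ J` on which `φ` is pointwise
topologically nilpotent for the `I₀`-adic topology. Let `M` be an `I₀`-adically complete
(and separated) `A`-module, `φM : M → M` a `φ`-semilinear endomorphism, and assume that
`J • M` is closed in the `I₀`-adic topology of `M`, i.e. `⋂ₙ (J•M + I₀ⁿ•M) = J•M`.
Then every `m ∈ M` with `φM m − m ∈ J • M` admits a unique `m' ∈ M` with `φM m' = m'`
and `m' − m ∈ J • M`; equivalently, reduction modulo `J • M` is a bijection from the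
`φM`-fixed points of `M` onto the fixed points of `M/(J • M)`. -/
theorem semilinear_fixed_point_lifting
    {A M : Type*} [CommRing A] [AddCommGroup M] [Module A M]
    (I₀ J : Ideal A) (φ : A →+* A)
    (hI₀ : ∀ a ∈ I₀, φ a ∈ I₀) (hJ : ∀ a ∈ J, φ a ∈ J)
    (hnil : ∀ a ∈ J, ∀ n : ℕ, ∃ N : ℕ, ∀ k ≥ N, (⇑φ)^[k] a ∈ I₀ ^ n)
    [IsAdicComplete I₀ M]
    (hclosed : (⨅ n : ℕ, ((J • ⊤ : Submodule A M) ⊔ I₀ ^ n • ⊤)) = (J • ⊤ : Submodule A M))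
    (φM : M →ₛₗ[φ] M) (m : M) (hm : φM m - m ∈ (J • ⊤ : Submodule A M)) :
    ∃! m' : M, φM m' = m' ∧ m' - m ∈ (J • ⊤ : Submodule A M) := by
  classical
  set S : Submodule A M := (J • ⊤ : Submodule A M) with hSdef
  -- φ preserves I₀ ^ n
  have hφpow : ∀ n : ℕ, ∀ a ∈ I₀ ^ n, φ a ∈ I₀ ^ n := by
    intro n a ha
    have h1 : Ideal.map φ (I₀ ^ n) ≤ I₀ ^ n := by
      rw [Ideal.map_pow]
      exact Ideal.pow_right_mono (Ideal.map_le_iff_le_comap.mpr fun x hx => hI₀ x hx) n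
    exact h1 (Ideal.mem_map_of_mem φ ha)
  -- iterate semilinearity
  have hit_smul : ∀ (k : ℕ) (a : A) (x : M),
      (⇑φM)^[k] (a • x) = (⇑φ)^[k] a • (⇑φM)^[k] x := by
    intro k
    induction k with
    | zero => intro a x; simp
    | succ k ih =>
      intro a x
      rw [Function.iterate_succ_apply, Function.iterate_succ_apply,
        Function.iterate_succ_apply, map_smulₛₗ, ih]
  have hit_add : ∀ (k : ℕ) (x y : M), (⇑φM)^[k] (x + y) = (⇑φM)^[k] x + (⇑φM)^[k] y :=
    fun k x y => iterate_map_add φM k x y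
  have hit_sub : ∀ (k : ℕ) (x y : M), (⇑φM)^[k] (x - y) = (⇑φM)^[k] x - (⇑φM)^[k] y :=
    fun k x y => iterate_map_sub φM k x y
  -- φM preserves S and I₀^n • ⊤
  have hpresS : ∀ z ∈ S, φM z ∈ S := by
    intro z hz
    refine Submodule.smul_induction_on hz (fun a ha x _ => ?_) (fun x y hx hy => ?_)
    · rw [map_smulₛₗ]
      exact Submodule.smul_mem_smul (hJ a ha) trivial
    · rw [map_add]; exact S.add_mem hx hy
  have hpresI : ∀ (n : ℕ), ∀ z ∈ (I₀ ^ n • ⊤ : Submodule A M),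
      φM z ∈ (I₀ ^ n • ⊤ : Submodule A M) := by
    intro n z hz
    refine Submodule.smul_induction_on hz (fun a ha x _ => ?_) (fun x y hx hy => ?_)
    · rw [map_smulₛₗ]
      exact Submodule.smul_mem_smul (hφpow n a ha) trivial
    · rw [map_add]; exact Submodule.add_mem _ hx hy
  have hpresI' : ∀ (j n : ℕ), ∀ z ∈ (I₀ ^ n • ⊤ : Submodule A M),
      (⇑φM)^[j] z ∈ (I₀ ^ n • ⊤ : Submodule A M) := by
    intro j
    induction j with
    | zero => intro n z hz; simpa using hz
    | succ j ih =>
      intro n z hz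
      rw [Function.iterate_succ_apply]
      exact ih n _ (hpresI n z hz)
  have hpresS' : ∀ (j : ℕ), ∀ z ∈ S, (⇑φM)^[j] z ∈ S := by
    intro j
    induction j with
    | zero => intro z hz; simpa using hz
    | succ j ih =>
      intro z hz
      rw [Function.iterate_succ_apply]
      exact ih _ (hpresS z hz)
  -- key nilpotence on S
  have hnilS : ∀ z ∈ S, ∀ n : ℕ, ∃ N : ℕ, ∀ k ≥ N,
      (⇑φM)^[k] z ∈ (I₀ ^ n • ⊤ : Submodule A M) := by
    intro z hz n
    refine Submodule.smul_induction_on hz (fun a ha x _ => ?_) (fun x y hx hy => ?_)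
    · obtain ⟨N, hN⟩ := hnil a ha n
      exact ⟨N, fun k hk => by
        rw [hit_smul]
        exact Submodule.smul_mem_smul (hN k hk) trivial⟩
    · obtain ⟨N₁, h₁⟩ := hx
      obtain ⟨N₂, h₂⟩ := hy
      refine ⟨max N₁ N₂, fun k hk => ?_⟩
      rw [hit_add]
      exact Submodule.add_mem _ (h₁ k (le_trans (le_max_left _ _) hk))
        (h₂ k (le_trans (le_max_right _ _) hk))
  set d : M := φM m - m with hddef
  set ms : ℕ → M := fun k => (⇑φM)^[k] m with hmsdef
  have hstep : ∀ k : ℕ, ms (k + 1) - ms k = (⇑φM)^[k] d := by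
    intro k
    simp only [hmsdef, hddef, Function.iterate_succ_apply, hit_sub]
  -- telescoping sums
  have htel : ∀ (P : Submodule A M) (k : ℕ), (∀ j, k ≤ j → (⇑φM)^[j] d ∈ P) →
      ∀ l, k ≤ l → ms l - ms k ∈ P := by
    intro P k hk l hl
    induction l, hl using Nat.le_induction with
    | base => simpa using P.zero_mem
    | succ l hl ih =>
      have : ms (l + 1) - ms k = (ms (l + 1) - ms l) + (ms l - ms k) := by abel
      rw [this, hstep]
      exact P.add_mem (hk l hl) ih
  -- m_k - m ∈ S
  have hmsS : ∀ k, ms k - m ∈ S := by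
    intro k
    have := htel S 0 (fun j _ => hpresS' j d hm) k (Nat.zero_le k)
    simpa [hmsdef] using this
  -- choose the Cauchy rate
  choose N hN using fun n => hnilS d hm n
  set c : ℕ → ℕ := fun n => (Finset.range (n + 1)).sup N with hcdef
  have hcN : ∀ n, N n ≤ c n := fun n =>
    Finset.le_sup (Finset.self_mem_range_succ n)
  have hcmono : Monotone c := fun a b hab =>
    Finset.sup_mono (Finset.range_subset_range.mpr (by omega))
  set f : ℕ → M := fun n => ms (c n) with hfdef
  have hf : ∀ {p q : ℕ}, p ≤ q → f p ≡ f q [SMOD (I₀ ^ p • ⊤ : Submodule A M)] := by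
    intro p q hpq
    rw [SModEq.sub_mem]
    have : f q - f p ∈ (I₀ ^ p • ⊤ : Submodule A M) :=
      htel _ (c p) (fun j hj => hN p j (le_trans (hcN p) hj)) (c q) (hcmono hpq)
    simpa using Submodule.neg_mem _ this
  obtain ⟨L, hL⟩ := IsPrecomplete.prec (IsAdicComplete.toIsPrecomplete (I := I₀)) hf
  -- ms k converges to L
  have hconv : ∀ n : ℕ, ∀ k ≥ c n, ms k - L ∈ (I₀ ^ n • ⊤ : Submodule A M) := by
    intro n k hk
    have h1 : ms k - f n ∈ (I₀ ^ n • ⊤ : Submodule A M) :=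
      htel _ (c n) (fun j hj => hN n j (le_trans (hcN n) hj)) k hk
    have h2 : f n - L ∈ (I₀ ^ n • ⊤ : Submodule A M) := (SModEq.sub_mem).mp (hL n)
    have : ms k - L = (ms k - f n) + (f n - L) := by abel
    rw [this]
    exact Submodule.add_mem _ h1 h2
  -- L is fixed
  have hfix : φM L = L := by
    have hzero : ∀ n : ℕ, φM L - L ∈ (I₀ ^ n • ⊤ : Submodule A M) := by
      intro n
      have h1 : ms (c n + 1) - L ∈ (I₀ ^ n • ⊤ : Submodule A M) :=
        hconv n (c n + 1) (Nat.le_succ _)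
      have h2 : φM (L - ms (c n)) ∈ (I₀ ^ n • ⊤ : Submodule A M) := by
        refine hpresI n _ ?_
        have := hconv n (c n) le_rfl
        simpa using Submodule.neg_mem _ this
      have : φM L - L = φM (L - ms (c n)) + (ms (c n + 1) - L) := by
        rw [map_sub]
        have : φM (ms (c n)) = ms (c n + 1) := by
          simp only [hmsdef, ← Function.iterate_succ_apply' (⇑φM)]
        rw [this]; abel
      rw [this]
      exact Submodule.add_mem _ h2 h1
    have h0 := IsHausdorff.haus (IsAdicComplete.toIsHausdorff (I := I₀)) (φM L - L)
      (fun n => by rw [SModEq.zero]; exact hzero n)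
    exact sub_eq_zero.mp h0
  -- L - m ∈ S
  have hLm : L - m ∈ S := by
    rw [← hclosed]
    rw [Submodule.mem_iInf]
    intro n
    have h1 : L - ms (c n) ∈ (I₀ ^ n • ⊤ : Submodule A M) := by
      have := hconv n (c n) le_rfl
      simpa using Submodule.neg_mem _ this
    have h2 : ms (c n) - m ∈ S := hmsS (c n)
    have heq : L - m = (ms (c n) - m) + (L - ms (c n)) := by abel
    rw [heq]
    exact Submodule.add_mem _ (Submodule.mem_sup_left h2) (Submodule.mem_sup_right h1)
  refine ⟨L, ⟨hfix, hLm⟩, ?_⟩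
  rintro y ⟨hyfix, hym⟩
  -- uniqueness
  have hd' : y - L ∈ S := by
    have : y - L = (y - m) - (L - m) := by abel
    rw [this]
    exact S.sub_mem hym hLm
  have hfixit : ∀ k : ℕ, (⇑φM)^[k] (y - L) = y - L := by
    intro k
    induction k with
    | zero => simp
    | succ k ih =>
      rw [Function.iterate_succ_apply', ih, map_sub, hyfix, hfix]
  have hzero : ∀ n : ℕ, y - L ∈ (I₀ ^ n • ⊤ : Submodule A M) := by
    intro n
    obtain ⟨N', hN'⟩ := hnilS (y - L) hd' n
    have := hN' N' le_rfl
    rwa [hfixit] at this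
  have h0 := IsHausdorff.haus (IsAdicComplete.toIsHausdorff (I := I₀)) (y - L)
    (fun n => by rw [SModEq.zero]; exact hzero n)
  exact sub_eq_zero.mp h0
end

section
/- Let p be a prime number, let A be a commutative ring, and let 0 → M₁ →^f M₂ → M → 0 be a short exact sequence of A-modules in which M₁ and M₂ are finite projective A-modules and M is killed by pⁿ for some n ≥ 0. Let B be a commutative A-algebra in which p is a nonzerodivisor. Then the base-changed map f ⊗ id_B : M₁ ⊗_A B → M₂ ⊗_A B is injective; equivalently Tor₁^A(M, B) = 0, i.e. the derived base change M ⊗^L_A B is concentrated in degree 0. -/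
open TensorProduct

/-- On a projective module over `B`, scalar multiplication by a nonzerodivisor of `B`
is injective. -/
lemma smul_injective_of_projective {B : Type*} [CommRing B] {P : Type*} [AddCommGroup P]
    [Module B P] [Module.Projective B P] {c : B} (hc : c ∈ nonZeroDivisors B) :
    Function.Injective (fun x : P => c • x) := by
  obtain ⟨F, _, _, hFree, i, s, hsi⟩ := Module.Projective.iff_split.mp ‹Module.Projective B P›
  intro x y hxy
  simp only at hxy
  -- reduce to the free module F
  have hi : c • i x = c • i y := by rw [← map_smul, ← map_smul, hxy]
  have hF : i x = i y := by
    let b := Module.Free.chooseBasis B F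
    apply b.repr.injective
    ext j
    have := congrArg (fun z => b.repr z j) hi
    simp only [map_smul, Finsupp.smul_apply, smul_eq_mul] at this
    exact (mul_cancel_left_mem_nonZeroDivisors hc).mp this
  have := congrArg s hF
  calc x = (s.comp i) x := by rw [hsi]; rfl
    _ = (s.comp i) y := this
    _ = y := by rw [hsi]; rfl

/-- Let `p` be a prime, `A` a commutative ring and `0 → M₁ → M₂ → M → 0` a short exact
sequence of `A`-modules with `M₁`, `M₂` finite projective and `M` killed by `pⁿ`. If `B`
is a commutative `A`-algebra in which `p` is a nonzerodivisor, then the base-changed map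
`M₁ ⊗[A] B → M₂ ⊗[A] B` is injective (i.e. `Tor₁^A(M, B) = 0`, i.e. the derived base
change of `M` to `B` is concentrated in degree `0`). -/
theorem baseChange_injective_of_torsion_cokernel
    {A : Type*} [CommRing A] (B : Type*) [CommRing B] [Algebra A B]
    {M₁ M₂ M : Type*} [AddCommGroup M₁] [Module A M₁] [AddCommGroup M₂] [Module A M₂]
    [AddCommGroup M] [Module A M]
    [Module.Finite A M₁] [Module.Projective A M₁]
    [Module.Finite A M₂] [Module.Projective A M₂]
    (p n : ℕ) (hp : p.Prime)
    (f : M₁ →ₗ[A] M₂) (g : M₂ →ₗ[A] M)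
    (hf : Function.Injective f) (hg : Function.Surjective g)
    (hfg : Function.Exact f g)
    (htors : ∀ x : M, (p ^ n : ℕ) • x = 0)
    (hpB : (p : B) ∈ nonZeroDivisors B) :
    Function.Injective (f.baseChange B) := by
  set q : A := (p : A) ^ n with hq
  -- `q • x` lands in the range of `f` for all `x : M₂`
  have hmem : ∀ x : M₂, q • x ∈ LinearMap.range f := by
    intro x
    have hker : g (q • x) = 0 := by
      rw [map_smul, hq, ← Nat.cast_pow, Nat.cast_smul_eq_nsmul, htors]
    rw [← LinearMap.exact_iff.mp hfg]
    exact LinearMap.mem_ker.mpr hker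
  -- construct `h : M₂ →ₗ[A] M₁` with `h ∘ f = q • id`
  let e : M₁ ≃ₗ[A] LinearMap.range f := LinearEquiv.ofInjective f hf
  let k : M₂ →ₗ[A] LinearMap.range f :=
    LinearMap.codRestrict (LinearMap.range f) (q • LinearMap.id) hmem
  let h : M₂ →ₗ[A] M₁ := e.symm.toLinearMap ∘ₗ k
  have hfe : ∀ y : LinearMap.range f, f (e.symm y) = (y : M₂) := by
    intro y
    have := e.apply_symm_apply y
    have h2 : (e (e.symm y) : M₂) = (y : M₂) := by rw [this]
    simp only [e, LinearEquiv.ofInjective_apply] at h2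
    exact h2
  have hhf : h.comp f = q • LinearMap.id := by
    ext x
    apply hf
    simp only [LinearMap.comp_apply, h, LinearMap.coe_comp, Function.comp_apply,
      LinearEquiv.coe_coe]
    rw [hfe]
    simp [k, map_smul]
  -- base change
  have key : (h.baseChange B) ∘ₗ (f.baseChange B) = q • LinearMap.id := by
    rw [← LinearMap.baseChange_comp, hhf, LinearMap.baseChange_smul, LinearMap.baseChange_id]
  -- q-smul on B ⊗ M₁ is (p : B)^n-smul, which is injective by projectivity/flatness
  have hreg : Function.Injective (fun x : B ⊗[A] M₁ => ((p : B) ^ n) • x) :=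
    smul_injective_of_projective (P := B ⊗[A] M₁) (pow_mem hpB n)
  intro x y hxy
  have h1 : ((h.baseChange B) ∘ₗ (f.baseChange B)) x = ((h.baseChange B) ∘ₗ (f.baseChange B)) y := by
    simp [LinearMap.comp_apply, hxy]
  rw [key] at h1
  have h2 : ((p : B) ^ n) • x = ((p : B) ^ n) • y := by
    have hx : q • x = ((p : B) ^ n) • x := by
      rw [hq, ← algebraMap_smul B ((p : A) ^ n) x, map_pow, map_natCast]
    have hy : q • y = ((p : B) ^ n) • y := by
      rw [hq, ← algebraMap_smul B ((p : A) ^ n) y, map_pow, map_natCast]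
    simpa [hx, hy] using h1
  exact hreg h2
end

section
/- Let R = (ℤ[x])[[f]] be the ring of formal power series in a variable f with coefficients in the polynomial ring ℤ[x] (equivalently, the f-adic completion of the polynomial ring ℤ[f, x]). Let D̂ denote the f-adic completion of the direct sum ⊕_{i∈ℕ} R, and let α : D̂ → D̂ be the R-linear map obtained by functoriality of f-adic completion from the R-linear endomorphism of ⊕_{i∈ℕ} R sending the i-th standard basis vector s_i to f·t_i − x·t_{i−1}, where t_j denotes the j-th standard basis vector of the target and t_{−1} := 0. Then α is injective. -/
noncomputable section

/-- The ring `R = (ℤ[x])[[f]]` of formal power series in the variable `f` with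
coefficients in the polynomial ring `ℤ[x]`. -/
abbrev CounterexampleRing : Type := PowerSeries (Polynomial ℤ)

/-- The power series variable `f ∈ R`. -/
def fElt : CounterexampleRing := PowerSeries.X

/-- The polynomial variable `x ∈ R` (as a constant power series). -/
def xElt : CounterexampleRing := PowerSeries.C (Polynomial.X : Polynomial ℤ)

/-- The `R`-linear endomorphism of `⊕_{i ∈ ℕ} R` sending the `i`-th standard basis
vector `s_i` to `f • t_i − x • t_{i−1}` (with `t_{−1} := 0`). -/
def alphaZero : (ℕ →₀ CounterexampleRing) →ₗ[CounterexampleRing] (ℕ →₀ CounterexampleRing) :=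
  Finsupp.lsum CounterexampleRing fun i =>
    LinearMap.toSpanSingleton CounterexampleRing (ℕ →₀ CounterexampleRing)
      (Finsupp.single i fElt - if i = 0 then 0 else Finsupp.single (i - 1) xElt)

lemma alphaZero_apply (v : ℕ →₀ CounterexampleRing) (i : ℕ) :
    alphaZero v i = fElt * v i - xElt * v (i + 1) := by
  induction v using Finsupp.induction_linear with
  | zero => simp
  | add f g hf hg =>
    simp only [map_add, Finsupp.add_apply, hf, hg]
    ring
  | single j r =>
    have hsingle : alphaZero (Finsupp.single j r) =
        r • (Finsupp.single j fElt - if j = 0 then 0 else Finsupp.single (j - 1) xElt) := by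
      simp [alphaZero]
    rw [hsingle]
    rcases eq_or_ne j 0 with rfl | hj
    · have h01 : ((0 : ℕ) = i + 1) = False := by simp
      rw [if_pos rfl, sub_zero]
      simp only [Finsupp.smul_apply, Finsupp.single_apply, smul_eq_mul, h01, if_false]
      split_ifs <;> ring
    · have hji : (j - 1 = i) = (j = i + 1) := by
        apply propext; omega
      simp only [if_neg hj, Finsupp.smul_apply, Finsupp.sub_apply, Finsupp.single_apply,
        smul_eq_mul, hji]
      split_ifs <;> ring

lemma mem_span_smul_top_iff (g : CounterexampleRing) (d : ℕ →₀ CounterexampleRing) :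
    d ∈ (Ideal.span {g} • ⊤ : Submodule CounterexampleRing (ℕ →₀ CounterexampleRing)) ↔
      ∀ i, g ∣ d i := by
  constructor
  · intro hd
    refine Submodule.smul_induction_on hd ?_ ?_
    · intro r hr m _ i
      rw [Ideal.mem_span_singleton] at hr
      rw [Finsupp.smul_apply, smul_eq_mul]
      exact hr.mul_right _
    · intro x y hx hy i
      rw [Finsupp.add_apply]
      exact dvd_add (hx i) (hy i)
  · intro h
    classical
    choose c hc using h
    set e : ℕ →₀ CounterexampleRing :=
      Finsupp.onFinset d.support (fun i => if d i = 0 then 0 else c i)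
        (fun i hi => Finsupp.mem_support_iff.mpr (by
          intro h0
          simp [h0] at hi)) with he
    have hde : d = g • e := by
      apply Finsupp.ext
      intro i
      rw [he, Finsupp.smul_apply, Finsupp.onFinset_apply, smul_eq_mul]
      split_ifs with h0
      · simp [h0]
      · exact hc i
    rw [hde]
    exact Submodule.smul_mem_smul (Ideal.mem_span_singleton_self g) trivial

lemma coeff_chain (m : ℕ) (v : ℕ →₀ CounterexampleRing)
    (hv : ∀ i, fElt ^ m ∣ (fElt * v i - xElt * v (i + 1))) :
    ∀ j i k, k + j < m →
      PowerSeries.coeff k (v i) =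
        Polynomial.X ^ j * PowerSeries.coeff (k + j) (v (i + j)) := by
  intro j
  induction j with
  | zero => intro i k _; simp
  | succ j ih =>
    intro i k hk
    have h1 : PowerSeries.coeff (k + 1) (fElt * v i - xElt * v (i + 1)) = 0 := by
      have h := hv i
      rw [show fElt = PowerSeries.X from rfl, PowerSeries.X_pow_dvd_iff] at h
      exact h (k + 1) (by omega)
    have h2 : PowerSeries.coeff k (v i) =
        Polynomial.X * PowerSeries.coeff (k + 1) (v (i + 1)) := by
      rw [map_sub, show fElt = PowerSeries.X from rfl,
        show xElt = PowerSeries.C (Polynomial.X : Polynomial ℤ) from rfl,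
        PowerSeries.coeff_succ_X_mul, PowerSeries.coeff_C_mul, sub_eq_zero] at h1
      exact h1
    have h3 := ih (i + 1) (k + 1) (by omega)
    calc PowerSeries.coeff k (v i)
        = Polynomial.X * PowerSeries.coeff (k + 1) (v (i + 1)) := h2
      _ = Polynomial.X * (Polynomial.X ^ j *
            PowerSeries.coeff (k + 1 + j) (v (i + 1 + j))) := by rw [h3]
      _ = Polynomial.X ^ (j + 1) * PowerSeries.coeff (k + (j + 1)) (v (i + (j + 1))) := by
          rw [show k + 1 + j = k + (j + 1) by omega, show i + 1 + j = i + (j + 1) by omega]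
          ring

/-- The map `α : D̂ → D̂` obtained from `alphaZero` by functoriality of `f`-adic
completion, where `D̂` is the `f`-adic completion of `⊕_{i ∈ ℕ} R`, is injective. -/
theorem adicCompletion_map_alphaZero_injective :
    Function.Injective
      (AdicCompletion.map (Ideal.span {fElt}) alphaZero) := by
  rw [injective_iff_map_eq_zero]
  intro a ha
  apply AdicCompletion.ext
  intro n
  rw [AdicCompletion.val_zero, Pi.zero_apply]
  choose w hw using fun m =>
    Submodule.Quotient.mk_surjective
      ((Ideal.span {fElt}) ^ m • ⊤ : Submodule CounterexampleRing (ℕ →₀ CounterexampleRing))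
      (a.val m)
  have hdvd : ∀ m i, fElt ^ m ∣ (fElt * (w m) i - xElt * (w m) (i + 1)) := by
    intro m i
    have h0 : (AdicCompletion.map (Ideal.span {fElt}) alphaZero a).val m = 0 := by
      rw [ha, AdicCompletion.val_zero, Pi.zero_apply]
    rw [AdicCompletion.map_val_apply, ← hw m, LinearMap.reduceModIdeal_apply,
      Submodule.Quotient.mk_eq_zero, Ideal.span_singleton_pow] at h0
    have h1 := (mem_span_smul_top_iff _ _).mp h0 i
    rwa [alphaZero_apply] at h1
  have hcomp : ∀ m, n ≤ m → ∀ i k, k < n →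
      PowerSeries.coeff k ((w m) i) = PowerSeries.coeff k ((w n) i) := by
    intro m hm i k hk
    have h1 : (Submodule.Quotient.mk (w m) :
        _ ⧸ ((Ideal.span {fElt}) ^ n • ⊤ :
          Submodule CounterexampleRing (ℕ →₀ CounterexampleRing))) =
        Submodule.Quotient.mk (w n) := by
      rw [hw n, ← a.property hm, ← hw m]; rfl
    rw [Submodule.Quotient.eq] at h1
    rw [Ideal.span_singleton_pow] at h1
    have h2 := (mem_span_smul_top_iff _ _).mp h1 i
    rw [show fElt = PowerSeries.X from rfl, PowerSeries.X_pow_dvd_iff] at h2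
    have h3 := h2 k hk
    rw [Finsupp.sub_apply, map_sub, sub_eq_zero] at h3
    exact h3
  rw [← hw n, Submodule.Quotient.mk_eq_zero, Ideal.span_singleton_pow]
  rw [mem_span_smul_top_iff]
  intro i
  rw [show fElt = PowerSeries.X from rfl, PowerSeries.X_pow_dvd_iff]
  intro k hk
  by_contra hne
  set p := PowerSeries.coeff k ((w n) i) with hp
  set m := n + k + p.natDegree + 2 with hm
  have h1 := coeff_chain m (w m) (hdvd m) (m - 1 - k) i k (by omega)
  have h2 : p = Polynomial.X ^ (m - 1 - k) *
      PowerSeries.coeff (k + (m - 1 - k)) ((w m) (i + (m - 1 - k))) := by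
    rw [hp, ← hcomp m (by omega) i k hk]
    exact h1
  have hdg := Polynomial.natDegree_le_of_dvd ⟨_, h2⟩ hne
  rw [Polynomial.natDegree_X_pow] at hdg
  omega

end
end
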